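/- Two interaction words w1, w2 in a global language L are Mazurkiewicz-trace equivalent (with independence given by disjointness of participant sets) if and only if their projections on every participant of L coincide: w1 ∼ w2 iff w1↾A = w2↾A for each A ∈ ptp(L). -/

import Mathlib

open scoped Classical

/-- Interactions `A→B:m` over participants and messages drawn from `ℕ`. -/
structure Interaction where
  snd : ℕ
  rcv : ℕ
  msg : ℕ
  ne : snd ≠ rcv

/-- Communication actions: outputs `AB!m` and inputs `AB?m`. -/
inductive Act where
  | out : ℕ → ℕ → ℕ → Act
  | inp : ℕ → ℕ → ℕ → Act
deriving DecidableEq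

/-- Finite or infinite words over `σ`. -/
inductive Word (σ : Type) : Type where
  | fin : List σ → Word σ
  | inf : (ℕ → σ) → Word σ

namespace Word

def get? {σ : Type} : Word σ → ℕ → Option σ
  | fin l, i => l[i]?
  | inf f, i => some (f i)

/-- Prefix relation on possibly infinite words. -/
def Pref {σ : Type} : Word σ → Word σ → Prop
  | fin l, fin l' => l <+: l'
  | fin l, inf g => ∀ i, i < l.length → l[i]? = some (g i)
  | inf f, inf g => f = g
  | inf _, fin _ => False

/-- Concatenation; if the first word is infinite the result is the first word. -/
def cat {σ : Type} : Word σ → Word σ → Word σ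
  | fin l, fin l' => fin (l ++ l')
  | fin l, inf g => inf (fun i => if h : i < l.length then l.get ⟨i, h⟩ else g (i - l.length))
  | inf f, _ => inf f

def Finite {σ : Type} : Word σ → Prop
  | fin _ => True
  | inf _ => False

end Word

/-- Prefix closure of a language. -/
def prefCl {σ : Type} (L : Set (Word σ)) : Set (Word σ) :=
  {z | ∃ z' ∈ L, Word.Pref z z'}

def PrefixClosed {σ : Type} (L : Set (Word σ)) : Prop := L = prefCl L

def iptp (a : Interaction) : Set ℕ := {a.snd, a.rcv}

def asubj : Act → ℕ
  | .out A _ _ => A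
  | .inp _ B _ => B

def aptp : Act → Set ℕ
  | .out A B _ => {A, B}
  | .inp A B _ => {A, B}

/-- Participants of a word of interactions. -/
def wptp (w : Word Interaction) : Set ℕ :=
  {X | ∃ i a, w.get? i = some a ∧ X ∈ iptp a}

/-- Participants of a language of interactions. -/
def lptp (L : Set (Word Interaction)) : Set ℕ :=
  {X | ∃ w ∈ L, X ∈ wptp w}

/-- Global language: prefix-closed with finitely many participants. -/
def IsGLang (L : Set (Word Interaction)) : Prop :=
  PrefixClosed L ∧ (lptp L).Finite

/-- Projection of an interaction on a participant. -/
def projI (X : ℕ) (a : Interaction) : Option Act :=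
  if X = a.snd then some (.out a.snd a.rcv a.msg)
  else if X = a.rcv then some (.inp a.snd a.rcv a.msg)
  else none

def projL (X : ℕ) (l : List Interaction) : List Act := l.filterMap (projI X)

/-- Projection of a (possibly infinite) word of interactions on a participant. -/
noncomputable def proj (X : ℕ) : Word Interaction → Word Act
  | .fin l => .fin (projL X l)
  | .inf f =>
    if {i | (projI X (f i)).isSome = true}.Infinite then
      .inf (fun n =>
        (projI X (f (Nat.nth (fun i => (projI X (f i)).isSome = true) n))).getD (.out 0 0 0))
    else
      .fin (projL X ((List.range (sSup {i | (projI X (f i)).isSome = true} + 1)).map f))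

/-- A communicating system: a set of participants with a local language for each. -/
structure CSystem where
  P : Set ℕ
  lang : ℕ → Set (Word Act)

/-- Well-formedness of a communicating system: finitely many participants, each
assigned a prefix-closed `X`-local language over the participants of the system,
different from `{ε}`. -/
def IsSystem (S : CSystem) : Prop :=
  S.P.Finite ∧ ∀ X ∈ S.P,
    PrefixClosed (S.lang X) ∧
    (∀ w ∈ S.lang X, ∀ i a, Word.get? w i = some a → asubj a = X ∧ aptp a ⊆ S.P) ∧
    S.lang X ≠ {Word.fin []}

/-- Synchronous semantics of a communicating system. -/
def sem (S : CSystem) : Set (Word Interaction) :=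
  {w | wptp w ⊆ S.P ∧ ∀ X ∈ S.P, proj X w ∈ S.lang X}

/-- Projection of a global language on a participant. -/
def projLang (X : ℕ) (L : Set (Word Interaction)) : Set (Word Act) := proj X '' L

/-- The communicating system projected from a global language. -/
noncomputable def projSys (L : Set (Word Interaction)) : CSystem :=
  ⟨lptp L, fun X => projLang X L⟩

/-- Synchronous semantics of the projected system, `⟦L↾⟧`. -/
noncomputable def gsem (L : Set (Word Interaction)) : Set (Word Interaction) :=
  sem (projSys L)

/-- Closure under unknown information. -/
def CUI (L : Set (Word Interaction)) : Prop :=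
  ∀ (w1 w2 : List Interaction) (a : Interaction) (w : Word Interaction),
    Word.fin (w1 ++ [a]) ∈ L → Word.fin (w2 ++ [a]) ∈ L → w ∈ L →
    proj a.snd w = proj a.snd (Word.fin w1) →
    proj a.rcv w = proj a.rcv (Word.fin w2) →
    w.cat (Word.fin [a]) ∈ L

/-- Continuity: an infinite word belongs to `L` whenever infinitely many of its
finite prefixes do. -/
def WContinuous {σ : Type} (L : Set (Word σ)) : Prop :=
  ∀ g : ℕ → σ,
    {l : List σ | Word.fin l ∈ L ∧ Word.Pref (Word.fin l) (Word.inf g)}.Infinite →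
    Word.inf g ∈ L

/-- Standard-or-continuous language. -/
def SC (L : Set (Word Interaction)) : Prop :=
  (∀ w ∈ L, w.Finite) ∨ WContinuous L

/-- Maximal word in a language. -/
def MaximalIn {σ : Type} (L : Set (Word σ)) (w : Word σ) : Prop :=
  w ∈ L ∧ ∀ w' ∈ L, Word.Pref w w' → w' = w

/-- Participant `X` distinguishes two words. -/
def Distinguishes (X : ℕ) (w1 w2 : Word Interaction) : Prop :=
  proj X w1 ≠ proj X w2 ∧
  ¬ (Word.Pref (proj X w1) (proj X w2) ∧ proj X w1 ≠ proj X w2) ∧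
  ¬ (Word.Pref (proj X w2) (proj X w1) ∧ proj X w2 ≠ proj X w1)

/-- Branch-awareness of a global language. -/
def BranchAware (L : Set (Word Interaction)) : Prop :=
  ∀ X ∈ lptp L, ∀ w1 w2, MaximalIn L w1 → MaximalIn L w2 →
    proj X w1 ≠ proj X w2 → Distinguishes X w1 w2

/-- Swapping two adjacent independent interactions. -/
inductive SwapStep : List Interaction → List Interaction → Prop
  | mk (u v : List Interaction) (a b : Interaction) (h : iptp a ∩ iptp b = ∅) :
      SwapStep (u ++ a :: b :: v) (u ++ b :: a :: v)

/-- Mazurkiewicz trace equivalence on finite words. -/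
def TraceEqL : List Interaction → List Interaction → Prop :=
  Relation.ReflTransGen SwapStep

/-- `w ≪ w'` à la Gastin. -/
def wll (w w' : Word Interaction) : Prop :=
  ∀ l : List Interaction, Word.Pref (Word.fin l) w →
    ∃ l' h : List Interaction, Word.Pref (Word.fin l') w' ∧ TraceEqL (l ++ h) l'

/-- Trace equivalence on possibly infinite words. -/
def TraceEq : Word Interaction → Word Interaction → Prop
  | .fin l, .fin l' => TraceEqL l l'
  | w, w' => wll w w' ∧ wll w' w

/-- Finite-state automata with states `Fin n`, all states accepting. -/
structure FSA (σ : Type) where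
  n : ℕ
  q0 : Fin n
  tr : Fin n → σ → Fin n → Prop

inductive FinRun {σ : Type} (A : FSA σ) : Fin A.n → List σ → Fin A.n → Prop
  | nil (q : Fin A.n) : FinRun A q [] q
  | cons {q q' q'' : Fin A.n} {a : σ} {l : List σ} :
      A.tr q a q' → FinRun A q' l q'' → FinRun A q (a :: l) q''

/-- The language of an FSA with all states accepting: finite words labelling runs
from the initial state, together with infinite words labelling infinite runs
(Büchi acceptance with all states accepting). -/
def LangSet {σ : Type} (A : FSA σ) : Set (Word σ) :=
  {w | match w with
       | .fin l => ∃ q, FinRun A A.q0 l q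
       | .inf f => ∃ qs : ℕ → Fin A.n, qs 0 = A.q0 ∧ ∀ i, A.tr (qs i) (f i) (qs (i+1))}

/-- Configurations of a system of CFSMs. -/
def Conf (M : ℕ → FSA Act) : Type := (X : ℕ) → Fin (M X).n

/-- A synchronisation step of the product automaton. -/
def PStep (P : Finset ℕ) (M : ℕ → FSA Act) (s : Conf M) (a : Interaction) (s' : Conf M) : Prop :=
  a.snd ∈ P ∧ a.rcv ∈ P ∧
  (M a.snd).tr (s a.snd) (Act.out a.snd a.rcv a.msg) (s' a.snd) ∧
  (M a.rcv).tr (s a.rcv) (Act.inp a.snd a.rcv a.msg) (s' a.rcv) ∧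
  ∀ X, X ≠ a.snd → X ≠ a.rcv → s X = s' X

def initConf (M : ℕ → FSA Act) : Conf M := fun X => (M X).q0

inductive PRun (P : Finset ℕ) (M : ℕ → FSA Act) : Conf M → List Interaction → Conf M → Prop
  | nil (s : Conf M) : PRun P M s [] s
  | cons {s s' s'' : Conf M} {a : Interaction} {l : List Interaction} :
      PStep P M s a s' → PRun P M s' l s'' → PRun P M s (a :: l) s''

/-- The language of the synchronous product automaton of a system of CFSMs. -/
def prodLang (P : Finset ℕ) (M : ℕ → FSA Act) : Set (Word Interaction) :=
  {w | match w with
       | .fin l => ∃ s, PRun P M (initConf M) l s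
       | .inf f => ∃ cs : ℕ → Conf M, cs 0 = initConf M ∧
           ∀ i, PStep P M (cs i) (f i) (cs (i+1))}

/-! ### Auxiliary development -/

section Aux

open Word

/-- Extensionality for interactions. -/
lemma Interaction.ext' {a b : Interaction} (h1 : a.snd = b.snd) (h2 : a.rcv = b.rcv)
    (h3 : a.msg = b.msg) : a = b := by
  cases a; cases b; simp_all

lemma mem_iptp {X : ℕ} {a : Interaction} : X ∈ iptp a ↔ X = a.snd ∨ X = a.rcv := by
  simp [iptp]

lemma projI_eq_none {X : ℕ} {a : Interaction} (h : X ∉ iptp a) : projI X a = none := by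
  rw [mem_iptp] at h
  push_neg at h
  simp [projI, h.1, h.2]

lemma projI_isSome {X : ℕ} {a : Interaction} (h : (projI X a).isSome) : X ∈ iptp a := by
  by_contra hX
  rw [projI_eq_none hX] at h
  simp at h

lemma projL_append (X : ℕ) (l l' : List Interaction) :
    projL X (l ++ l') = projL X l ++ projL X l' := by
  simp [projL, List.filterMap_append]

lemma projL_cons (X : ℕ) (a : Interaction) (l : List Interaction) :
    projL X (a :: l) = match projI X a with
      | some b => b :: projL X l
      | none => projL X l := by
  simp [projL, List.filterMap_cons]
  cases projI X a <;> simp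

lemma projL_cons_none {X : ℕ} {a : Interaction} (h : projI X a = none) (l : List Interaction) :
    projL X (a :: l) = projL X l := by
  rw [projL_cons, h]

lemma projL_cons_some {X : ℕ} {a : Interaction} {b : Act} (h : projI X a = some b)
    (l : List Interaction) : projL X (a :: l) = b :: projL X l := by
  rw [projL_cons, h]

lemma projL_eq_nil {X : ℕ} {l : List Interaction} (h : ∀ a ∈ l, X ∉ iptp a) :
    projL X l = [] := by
  induction l with
  | nil => rfl
  | cons a t ih =>
    rw [projL_cons_none (projI_eq_none (h a (by simp)))]
    exact ih fun a ha => h a (by simp [ha])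

lemma projL_mono {l l' : List Interaction} (h : l <+: l') (X : ℕ) :
    projL X l <+: projL X l' := by
  obtain ⟨t, rfl⟩ := h
  rw [projL_append]
  exact List.prefix_append _ _

/-- Swap steps preserve projections. -/
lemma SwapStep.projL_eq {l l' : List Interaction} (h : SwapStep l l') (X : ℕ) :
    projL X l = projL X l' := by
  obtain ⟨u, v, a, b, hab⟩ := h
  have hor : projI X a = none ∨ projI X b = none := by
    by_contra hc
    push_neg at hc
    have ha : X ∈ iptp a := projI_isSome (by simp [Option.isSome_iff_ne_none, hc.1])
    have hb : X ∈ iptp b := projI_isSome (by simp [Option.isSome_iff_ne_none, hc.2])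
    have : X ∈ iptp a ∩ iptp b := ⟨ha, hb⟩
    rw [hab] at this
    exact this
  rw [projL_append, projL_append]
  congr 1
  rcases hor with h0 | h0 <;>
    cases hpa : projI X a <;> cases hpb : projI X b <;>
      simp_all [projL_cons_none, projL_cons_some]

lemma SwapStep.length_eq {l l' : List Interaction} (h : SwapStep l l') :
    l.length = l'.length := by
  obtain ⟨u, v, a, b, hab⟩ := h
  simp

lemma SwapStep.symm {l l' : List Interaction} (h : SwapStep l l') : SwapStep l' l := by
  obtain ⟨u, v, a, b, hab⟩ := h
  exact SwapStep.mk u v b a (by rw [Set.inter_comm]; exact hab)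

lemma TraceEqL.projL_eq {l l' : List Interaction} (h : TraceEqL l l') (X : ℕ) :
    projL X l = projL X l' := by
  induction h with
  | refl => rfl
  | tail _ hstep ih => exact ih.trans (hstep.projL_eq X)

lemma TraceEqL.length_eq {l l' : List Interaction} (h : TraceEqL l l') :
    l.length = l'.length := by
  induction h with
  | refl => rfl
  | tail _ hstep ih => exact ih.trans hstep.length_eq

lemma TraceEqL.symm {l l' : List Interaction} (h : TraceEqL l l') : TraceEqL l' l :=
  by haveI : Std.Symm SwapStep := ⟨fun _ _ hs => hs.symm⟩; exact Relation.ReflTransGen.stdSymm.symm _ _ h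

lemma TraceEqL.trans {l₁ l₂ l₃ : List Interaction} (h : TraceEqL l₁ l₂) (h' : TraceEqL l₂ l₃) :
    TraceEqL l₁ l₃ := Relation.ReflTransGen.trans h h'

lemma SwapStep.cons {l l' : List Interaction} (c : Interaction) (h : SwapStep l l') :
    SwapStep (c :: l) (c :: l') := by
  obtain ⟨u, v, a, b, hab⟩ := h
  exact SwapStep.mk (c :: u) v a b hab

lemma TraceEqL.cons {l l' : List Interaction} (c : Interaction) (h : TraceEqL l l') :
    TraceEqL (c :: l) (c :: l') := by
  induction h with
  | refl => exact Relation.ReflTransGen.refl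
  | tail _ hstep ih => exact ih.tail (hstep.cons c)

/-- An interaction can be moved to the front past independent interactions. -/
lemma moveFront {a : Interaction} {u : List Interaction}
    (h : ∀ b ∈ u, iptp a ∩ iptp b = ∅) (v : List Interaction) :
    TraceEqL (u ++ a :: v) (a :: (u ++ v)) := by
  induction u with
  | nil => exact Relation.ReflTransGen.refl
  | cons b u' ih =>
    have step1 : TraceEqL (b :: (u' ++ a :: v)) (b :: (a :: (u' ++ v))) :=
      (ih fun c hc => h c (by simp [hc])).cons b
    refine step1.trans ?_
    have hswap : SwapStep ([] ++ b :: a :: (u' ++ v)) ([] ++ a :: b :: (u' ++ v)) :=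
      SwapStep.mk [] (u' ++ v) b a
        (by rw [Set.inter_comm]; exact h b (by simp))
    exact Relation.ReflTransGen.single hswap

end Aux
section Aux2
open Word

/-- If the projections of `a :: t` on both participants of `a` are prefixes of the
corresponding projections of `l'`, then `a` occurs in `l'` after only interactions
independent of `a`. -/
lemma extract_first {a : Interaction} {t l' : List Interaction}
    (hs : projL a.snd (a :: t) <+: projL a.snd l')
    (hr : projL a.rcv (a :: t) <+: projL a.rcv l') :
    ∃ u v, l' = u ++ a :: v ∧ ∀ b ∈ u, iptp a ∩ iptp b = ∅ := by
  induction l' with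
  | nil =>
    exfalso
    rw [projL_cons_some (b := Act.out a.snd a.rcv a.msg) (by simp [projI])] at hs
    simpa [projL] using hs
  | cons c l'' ih =>
    by_cases hind : iptp a ∩ iptp c = ∅
    · have hcs : a.snd ∉ iptp c := fun hc =>
        Set.eq_empty_iff_forall_notMem.mp hind a.snd ⟨by simp [mem_iptp], hc⟩
      have hcr : a.rcv ∉ iptp c := fun hc =>
        Set.eq_empty_iff_forall_notMem.mp hind a.rcv ⟨by simp [mem_iptp], hc⟩
      rw [projL_cons_none (projI_eq_none hcs)] at hs
      rw [projL_cons_none (projI_eq_none hcr)] at hr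
      obtain ⟨u, v, rfl, hu⟩ := ih hs hr
      exact ⟨c :: u, v, rfl, by
        intro b hb
        rcases List.mem_cons.mp hb with rfl | hb
        · exact hind
        · exact hu b hb⟩
    · -- c intersects a; show c = a
      have hca : c = a := by
        have hmem : a.snd ∈ iptp c ∨ a.rcv ∈ iptp c := by
          by_contra hcon
          push_neg at hcon
          refine hind (Set.eq_empty_iff_forall_notMem.mpr fun X hX => ?_)
          rcases mem_iptp.mp hX.1 with rfl | rfl
          · exact hcon.1 hX.2
          · exact hcon.2 hX.2
        rcases hmem with hm | hm
        · -- a.snd ∈ iptp c : first element of projL a.snd (c :: l'') is projI a.snd c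
          have hsa : projI a.snd a = some (Act.out a.snd a.rcv a.msg) := by simp [projI]
          rw [projL_cons_some hsa] at hs
          rcases mem_iptp.mp hm with he | he
          · have hsc : projI a.snd c = some (Act.out c.snd c.rcv c.msg) := by
              simp [projI, he]
            rw [projL_cons_some hsc] at hs
            have := (List.cons_prefix_cons.mp hs).1
            injection this.symm with e1 e2 e3
            exact Interaction.ext' e1 e2 e3
          · exfalso
            by_cases he2 : a.snd = c.snd
            · exact c.ne (he2.symm.trans he)
            · have hsc : projI a.snd c = some (Act.inp c.snd c.rcv c.msg) := by
                simp [projI, he2, he, Ne.symm c.ne]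
              rw [projL_cons_some hsc] at hs
              have := (List.cons_prefix_cons.mp hs).1
              exact Act.noConfusion this
        · have hra : projI a.rcv a = some (Act.inp a.snd a.rcv a.msg) := by
            simp [projI, (Ne.symm a.ne : a.rcv ≠ a.snd)]
          rw [projL_cons_some hra] at hr
          rcases mem_iptp.mp hm with he | he
          · have hrc : projI a.rcv c = some (Act.out c.snd c.rcv c.msg) := by
              simp [projI, he]
            rw [projL_cons_some hrc] at hr
            have := (List.cons_prefix_cons.mp hr).1
            exact absurd this (by simp)
          · by_cases he2 : a.rcv = c.snd
            · have hrc : projI a.rcv c = some (Act.out c.snd c.rcv c.msg) := by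
                simp [projI, he2]
              rw [projL_cons_some hrc] at hr
              have := (List.cons_prefix_cons.mp hr).1
              exact absurd this (by simp)
            · have hrc : projI a.rcv c = some (Act.inp c.snd c.rcv c.msg) := by
                simp [projI, he2, he, Ne.symm c.ne]
              rw [projL_cons_some hrc] at hr
              have := (List.cons_prefix_cons.mp hr).1
              injection this.symm with e1 e2 e3
              exact Interaction.ext' e1 e2 e3
      exact ⟨[], l'', by rw [hca]; rfl, by simp⟩

/-- Padding lemma: if every projection of `l` is a prefix of the corresponding
projection of `l'`, then `l` can be extended to a trace-equivalent of `l'`. -/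
lemma pad : ∀ (l l' : List Interaction),
    (∀ X, projL X l <+: projL X l') → ∃ h, TraceEqL (l ++ h) l'
  | [], l', _ => ⟨l', Relation.ReflTransGen.refl⟩
  | a :: t, l', hall => by
    obtain ⟨u, v, rfl, hu⟩ := extract_first (hall a.snd) (hall a.rcv)
    have htail : ∀ X, projL X t <+: projL X (u ++ v) := by
      intro X
      by_cases hX : X ∈ iptp a
      · have hXu : projL X u = [] := projL_eq_nil fun b hb hXb =>
          Set.eq_empty_iff_forall_notMem.mp (hu b hb) X ⟨hX, hXb⟩
        have hXa : ∃ act, projI X a = some act := by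
          rcases mem_iptp.mp hX with rfl | rfl
          · exact ⟨Act.out a.snd a.rcv a.msg, by simp [projI]⟩
          · exact ⟨Act.inp a.snd a.rcv a.msg, by simp [projI, (Ne.symm a.ne : a.rcv ≠ a.snd)]⟩
        obtain ⟨act, hact⟩ := hXa
        have h1 := hall X
        rw [projL_cons_some hact, projL_append, hXu, List.nil_append,
          projL_cons_some hact] at h1
        rw [projL_append, hXu, List.nil_append]
        exact (List.cons_prefix_cons.mp h1).2
      · have h1 := hall X
        rw [projL_cons_none (projI_eq_none hX)] at h1
        rw [projL_append, projL_cons_none (projI_eq_none hX), ← projL_append] at h1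
        exact h1
    obtain ⟨h, hh⟩ := pad t (u ++ v) htail
    refine ⟨h, ?_⟩
    have h1 : TraceEqL (a :: (t ++ h)) (a :: (u ++ v)) := hh.cons a
    have h2 : TraceEqL (a :: (u ++ v)) (u ++ a :: v) := (moveFront hu v).symm
    exact h1.trans h2
termination_by l => l.length
decreasing_by simp

end Aux2
section Aux3
open Word

/-- The prefix of length `n` of an infinite word. -/
def pre {σ : Type} (f : ℕ → σ) (n : ℕ) : List σ := (List.range n).map f

lemma pre_length {σ : Type} (f : ℕ → σ) (n : ℕ) : (pre f n).length = n := by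
  simp [pre]

lemma pre_get? {σ : Type} (f : ℕ → σ) {n i : ℕ} (h : i < n) :
    (pre f n)[i]? = some (f i) := by
  simp [pre, List.getElem?_map, List.getElem?_range h]

lemma pre_pref {σ : Type} (f : ℕ → σ) (n : ℕ) : Word.Pref (Word.fin (pre f n)) (Word.inf f) := by
  show ∀ i, i < (pre f n).length → (pre f n)[i]? = some (f i)
  intro i hi
  exact pre_get? f (by simpa [pre_length] using hi)

lemma pre_mono {σ : Type} (f : ℕ → σ) {n m : ℕ} (h : n ≤ m) : pre f n <+: pre f m := by
  refine List.IsPrefix.map f ?_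
  obtain ⟨k, rfl⟩ := Nat.exists_eq_add_of_le h
  rw [List.range_add]
  exact List.prefix_append _ _

lemma pref_fin_inf {σ : Type} {l : List σ} {f : ℕ → σ}
    (h : Word.Pref (Word.fin l) (Word.inf f)) : l = pre f l.length := by
  have h' : ∀ i, i < l.length → l[i]? = some (f i) := h
  apply List.ext_getElem?
  intro i
  by_cases hi : i < l.length
  · rw [h' i hi, pre_get? f hi]
  · rw [List.getElem?_eq_none (by omega), List.getElem?_eq_none (by rw [pre_length]; omega)]

lemma pref_fin_trans {σ : Type} {l l' : List σ} {W : Word σ} (h : l <+: l')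
    (h' : Word.Pref (Word.fin l') W) : Word.Pref (Word.fin l) W := by
  cases W with
  | fin m => exact h.trans h'
  | inf g =>
    intro i hi
    have hle : l.length ≤ l'.length := h.length_le
    have heq : l[i]? = l'[i]? := by
      obtain ⟨t, rfl⟩ := h
      exact (List.getElem?_append_left hi).symm
    rw [heq]
    exact h' i (lt_of_lt_of_le hi hle)

/-- The predicate: position `i` of `f` is visible to `X`. -/
def vis (X : ℕ) (f : ℕ → Interaction) (i : ℕ) : Prop := (projI X (f i)).isSome = true

/-- The `n`-th visible action. -/
noncomputable def visAct (X : ℕ) (f : ℕ → Interaction) (n : ℕ) : Act :=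
  (projI X (f (Nat.nth (vis X f) n))).getD (Act.out 0 0 0)

lemma projL_pre_rep (X : ℕ) (f : ℕ → Interaction) (n : ℕ) :
    projL X (pre f n) = (List.range (Nat.count (vis X f) n)).map (visAct X f) := by
  induction n with
  | zero => simp [pre, projL, Nat.count_zero]
  | succ n ih =>
    have hsplit : pre f (n + 1) = pre f n ++ [f n] := by
      simp [pre, List.range_succ]
    rw [hsplit, projL_append, ih, Nat.count_succ]
    by_cases hv : vis X f n
    · obtain ⟨act, hact⟩ := Option.isSome_iff_exists.mp hv
      have : projL X [f n] = [act] := by simp [projL, List.filterMap_cons, hact]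
      rw [this, if_pos hv, List.range_succ, List.map_append]
      congr 1
      simp only [List.map_cons, List.map_nil]
      congr 1
      unfold visAct
      rw [Nat.nth_count hv, hact]
      rfl
    · have hnone : projI X (f n) = none := by
        rw [← Option.not_isSome_iff_eq_none]
        exact hv
      have : projL X [f n] = [] := by simp [projL, List.filterMap_cons, hnone]
      rw [this, if_neg hv, List.append_nil, Nat.add_zero]

lemma proj_inf_of_infinite {X : ℕ} {f : ℕ → Interaction}
    (h : (setOf (vis X f)).Infinite) : proj X (Word.inf f) = Word.inf (visAct X f) := by
  have e : proj X (Word.inf f) = if (setOf (vis X f)).Infinite then Word.inf (visAct X f)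
      else Word.fin (projL X (pre f (sSup (setOf (vis X f)) + 1))) := rfl
  rw [e, if_pos h]

lemma proj_inf_of_finite {X : ℕ} {f : ℕ → Interaction}
    (h : ¬ (setOf (vis X f)).Infinite) :
    proj X (Word.inf f) = Word.fin (projL X (pre f (sSup (setOf (vis X f)) + 1))) := by
  have e : proj X (Word.inf f) = if (setOf (vis X f)).Infinite then Word.inf (visAct X f)
      else Word.fin (projL X (pre f (sSup (setOf (vis X f)) + 1))) := rfl
  rw [e, if_neg h]

lemma count_le_of_finite {X : ℕ} {f : ℕ → Interaction}
    (h : ¬ (setOf (vis X f)).Infinite) (n : ℕ) :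
    Nat.count (vis X f) n ≤ Nat.count (vis X f) (sSup (setOf (vis X f)) + 1) := by
  set M := sSup (setOf (vis X f)) with hM
  have hbd : ∀ i, vis X f i → i ≤ M := by
    intro i hi
    exact le_csSup (Set.Finite.bddAbove (Set.not_infinite.mp h)) hi
  rcases le_or_gt n (M + 1) with hle | hlt
  · exact Nat.count_monotone _ hle
  · have hstab : ∀ k, Nat.count (vis X f) (M + 1 + k) = Nat.count (vis X f) (M + 1) := by
      intro k
      induction k with
      | zero => rfl
      | succ k ihk =>
        rw [← Nat.add_assoc, Nat.count_succ, if_neg (fun hv => by have := hbd _ hv; omega),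
          ihk, Nat.add_zero]
    have : n = M + 1 + (n - (M + 1)) := by omega
    rw [this, hstab]

lemma count_unbounded {X : ℕ} {f : ℕ → Interaction}
    (h : (setOf (vis X f)).Infinite) (k : ℕ) : ∃ n, k ≤ Nat.count (vis X f) n := by
  exact ⟨Nat.nth (vis X f) k + 1, by rw [Nat.count_nth_succ_of_infinite h]; omega⟩

/-- Every projected prefix is a word-prefix of the projection. -/
lemma pf_pref_proj (X : ℕ) (f : ℕ → Interaction) (n : ℕ) :
    Word.Pref (Word.fin (projL X (pre f n))) (proj X (Word.inf f)) := by
  by_cases h : (setOf (vis X f)).Infinite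
  · rw [proj_inf_of_infinite h, projL_pre_rep]
    intro i hi
    simp only [List.length_map, List.length_range] at hi
    simp [List.getElem?_map, List.getElem?_range hi]
  · rw [proj_inf_of_finite h, projL_pre_rep, projL_pre_rep]
    show _ <+: _
    refine List.IsPrefix.map _ ?_
    obtain ⟨k, hk⟩ := Nat.exists_eq_add_of_le (count_le_of_finite h n)
    rw [hk, List.range_add]
    exact List.prefix_append _ _

/-- Comparability of two finite word-prefixes of the same word. -/
lemma pref_comparable {σ : Type} {l l' : List σ} {W : Word σ}
    (h : Word.Pref (Word.fin l) W) (h' : Word.Pref (Word.fin l') W)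
    (hlen : l.length ≤ l'.length) : l <+: l' := by
  cases W with
  | fin m =>
    have e1 : l = m.take l.length := List.prefix_iff_eq_take.mp h
    have e2 : l' = m.take l'.length := List.prefix_iff_eq_take.mp h'
    have e3 : l = l'.take l.length := by
      conv_lhs => rw [e1]
      rw [e2, List.take_take, Nat.min_eq_left hlen]
    conv_lhs => rw [e3]
    exact List.take_prefix _ _
  | inf g =>
    rw [pref_fin_inf h, pref_fin_inf h']
    exact (pre_mono g hlen)

end Aux3
section Aux4
open Word

lemma pref_fin_fin {σ : Type} {a b : List σ} : Word.Pref (Word.fin a) (Word.fin b) ↔ a <+: b :=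
  Iff.rfl

lemma mem_wptp_fin {X : ℕ} {l : List Interaction} {a : Interaction} (ha : a ∈ l)
    (hXa : X ∈ iptp a) : X ∈ wptp (Word.fin l) := by
  obtain ⟨i, hi⟩ := List.mem_iff_getElem?.mp ha
  exact ⟨i, a, hi, hXa⟩

lemma mem_wptp_pre {X : ℕ} {f : ℕ → Interaction} {n : ℕ} {a : Interaction}
    (ha : a ∈ pre f n) (hXa : X ∈ iptp a) : X ∈ wptp (Word.inf f) := by
  obtain ⟨i, -, rfl⟩ := List.mem_map.mp ha
  exact ⟨i, f i, rfl, hXa⟩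

lemma exists_vis_infinite {L : Set (Word Interaction)} (hfin : (lptp L).Finite)
    {f : ℕ → Interaction} (hf : Word.inf f ∈ L) :
    ∃ X ∈ lptp L, (setOf (vis X f)).Infinite := by
  have hmem : ∀ i, (f i).snd ∈ lptp L := fun i =>
    ⟨Word.inf f, hf, ⟨i, f i, rfl, by simp [iptp]⟩⟩
  by_contra hcon
  push_neg at hcon
  have hfib : ∀ X ∈ lptp L, (setOf (fun i => (f i).snd = X)).Finite := by
    intro X hX
    refine Set.Finite.subset (hcon X hX) ?_
    intro i hi
    show (projI X (f i)).isSome = true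
    have : X = (f i).snd := hi.symm
    simp [projI, this]
  have huniv : (Set.univ : Set ℕ).Finite := by
    refine Set.Finite.subset (hfin.biUnion (fun X hX => hfib X hX)) ?_
    intro i _
    exact Set.mem_biUnion (hmem i) rfl
  exact Set.infinite_univ huniv

lemma not_wll_inf_fin {g : ℕ → Interaction} {l : List Interaction} :
    ¬ wll (Word.inf g) (Word.fin l) := by
  intro hw
  obtain ⟨l', h', hp', heq⟩ := hw (pre g (l.length + 1)) (pre_pref g _)
  have hlen := heq.length_eq
  have hle : l'.length ≤ l.length := (pref_fin_fin.mp hp').length_le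
  rw [List.length_append, pre_length] at hlen
  omega

/-- From `wll` we get that each projected prefix of `f` is a word-prefix of the
projection of `g`. -/
lemma wll_pref_proj {f g : ℕ → Interaction} (hw : wll (Word.inf f) (Word.inf g))
    (X : ℕ) (n : ℕ) :
    Word.Pref (Word.fin (projL X (pre f n))) (proj X (Word.inf g)) := by
  obtain ⟨l', h', hp', heq⟩ := hw (pre f n) (pre_pref f n)
  have hpre : projL X (pre f n) <+: projL X l' := by
    rw [← heq.projL_eq X, projL_append]
    exact List.prefix_append _ _
  refine pref_fin_trans hpre ?_
  rw [pref_fin_inf hp']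
  exact pf_pref_proj X g _

/-- Projection equality from double `wll`, for any participant. -/
lemma proj_eq_of_wll {f g : ℕ → Interaction} (hA : wll (Word.inf f) (Word.inf g))
    (hB : wll (Word.inf g) (Word.inf f)) (X : ℕ) :
    proj X (Word.inf f) = proj X (Word.inf g) := by
  have key1 := wll_pref_proj hA X
  have key2 := wll_pref_proj hB X
  by_cases hS1 : (setOf (vis X f)).Infinite <;> by_cases hS2 : (setOf (vis X g)).Infinite
  · rw [proj_inf_of_infinite hS1, proj_inf_of_infinite hS2]
    congr 1
    funext k
    obtain ⟨n, hn⟩ := count_unbounded hS1 (k + 1)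
    have hk := key1 n
    rw [proj_inf_of_infinite hS2, projL_pre_rep] at hk
    have hlen : k < ((List.range (Nat.count (vis X f) n)).map (visAct X f)).length := by
      simp; omega
    have hval := hk k hlen
    simp only [List.getElem?_map, List.getElem?_range (show k < Nat.count (vis X f) n by omega),
      Option.map_some] at hval
    exact Option.some_injective _ hval
  · exfalso
    obtain ⟨n, hn⟩ := count_unbounded hS1
      ((projL X (pre g (sSup (setOf (vis X g)) + 1))).length + 1)
    have hk := key1 n
    rw [proj_inf_of_finite hS2] at hk
    have := (pref_fin_fin.mp hk).length_le
    rw [projL_pre_rep, List.length_map, List.length_range] at this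
    omega
  · exfalso
    obtain ⟨n, hn⟩ := count_unbounded hS2
      ((projL X (pre f (sSup (setOf (vis X f)) + 1))).length + 1)
    have hk := key2 n
    rw [proj_inf_of_finite hS1] at hk
    have := (pref_fin_fin.mp hk).length_le
    rw [projL_pre_rep, List.length_map, List.length_range] at this
    omega
  · rw [proj_inf_of_finite hS1, proj_inf_of_finite hS2]
    have p1 := key1 (sSup (setOf (vis X f)) + 1)
    rw [proj_inf_of_finite hS2] at p1
    have p2 := key2 (sSup (setOf (vis X g)) + 1)
    rw [proj_inf_of_finite hS1] at p2
    have hp1 := pref_fin_fin.mp p1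
    have hp2 := pref_fin_fin.mp p2
    exact congrArg Word.fin (hp1.eq_of_length (le_antisymm hp1.length_le hp2.length_le))

/-- Main construction for the converse direction on infinite words. -/
lemma wll_of_proj_eq {L : Set (Word Interaction)} {f g : ℕ → Interaction}
    (hfL : Word.inf f ∈ L) (_hgL : Word.inf g ∈ L)
    (hproj : ∀ X ∈ lptp L, proj X (Word.inf f) = proj X (Word.inf g)) :
    wll (Word.inf f) (Word.inf g) := by
  intro l hl
  have hn : l = pre f l.length := pref_fin_inf hl
  have hc : ∀ X, ∃ m, projL X l <+: projL X (pre g m) := by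
    intro X
    by_cases hX : X ∈ lptp L
    · have hpw : Word.Pref (Word.fin (projL X l)) (proj X (Word.inf g)) := by
        rw [← hproj X hX]
        conv_lhs => rw [hn]
        exact pf_pref_proj X f l.length
      by_cases hS : (setOf (vis X g)).Infinite
      · rw [proj_inf_of_infinite hS] at hpw
        obtain ⟨m, hm⟩ := count_unbounded hS (projL X l).length
        refine ⟨m, ?_⟩
        have hpw2 := pf_pref_proj X g m
        rw [proj_inf_of_infinite hS] at hpw2
        refine pref_comparable hpw hpw2 ?_
        rw [projL_pre_rep, List.length_map, List.length_range]
        exact hm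
      · rw [proj_inf_of_finite hS] at hpw
        exact ⟨_, pref_fin_fin.mp hpw⟩
    · refine ⟨0, ?_⟩
      have hnil : projL X l = [] := projL_eq_nil fun a ha hXa =>
        hX ⟨Word.inf f, hfL, mem_wptp_pre (hn ▸ ha) hXa⟩
      rw [hnil]
      exact List.nil_prefix
  classical
  set Xs : Finset ℕ := (l.map Interaction.snd).toFinset ∪ (l.map Interaction.rcv).toFinset
    with hXs
  set M := Xs.sup (fun X => (hc X).choose) with hM
  have hall : ∀ X, projL X l <+: projL X (pre g M) := by
    intro X
    by_cases hX : X ∈ Xs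
    · exact ((hc X).choose_spec).trans
        (projL_mono (pre_mono g (Finset.le_sup (f := fun X => (hc X).choose) hX)) X)
    · have hnil : projL X l = [] := by
        refine projL_eq_nil fun a ha hXa => hX ?_
        rw [hXs]
        rcases mem_iptp.mp hXa with rfl | rfl
        · exact Finset.mem_union_left _ (by simp; exact ⟨a, ha, rfl⟩)
        · exact Finset.mem_union_right _ (by simp; exact ⟨a, ha, rfl⟩)
      rw [hnil]
      exact List.nil_prefix
  obtain ⟨hpad, heq⟩ := pad l (pre g M) hall
  exact ⟨pre g M, hpad, pre_pref g M, heq⟩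

end Aux4
/-- Two words of a global language are trace equivalent iff their projections on
every participant of the language coincide. -/
theorem stmt6 (L : Set (Word Interaction)) (hL : IsGLang L)
    (w1 w2 : Word Interaction) (h1 : w1 ∈ L) (h2 : w2 ∈ L) :
    TraceEq w1 w2 ↔ ∀ X ∈ lptp L, proj X w1 = proj X w2 := by
  obtain ⟨-, hfin⟩ := hL
  cases w1 with
  | fin l1 =>
    cases w2 with
    | fin l2 =>
      constructor
      · intro h X _
        have h' : TraceEqL l1 l2 := h
        exact congrArg Word.fin (h'.projL_eq X)
      · intro h
        have hall : ∀ X, projL X l1 = projL X l2 := by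
          intro X
          by_cases hX : X ∈ lptp L
          · have := h X hX
            exact congrArg (fun w => match w with | Word.fin l => l | Word.inf _ => []) this
          · have k1 : projL X l1 = [] := projL_eq_nil fun a ha hXa =>
              hX ⟨Word.fin l1, h1, mem_wptp_fin ha hXa⟩
            have k2 : projL X l2 = [] := projL_eq_nil fun a ha hXa =>
              hX ⟨Word.fin l2, h2, mem_wptp_fin ha hXa⟩
            rw [k1, k2]
        obtain ⟨g1, e1⟩ := pad l1 l2 (fun X => by rw [hall X])
        obtain ⟨g2, e2⟩ := pad l2 l1 (fun X => by rw [hall X])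
        have len1 := e1.length_eq
        have len2 := e2.length_eq
        rw [List.length_append] at len1 len2
        have hg1 : g1 = [] := List.eq_nil_of_length_eq_zero (by omega)
        subst hg1
        rw [List.append_nil] at e1
        exact e1
    | inf f2 =>
      constructor
      · intro h
        exact absurd (h : _ ∧ _).2 not_wll_inf_fin
      · intro h
        exfalso
        obtain ⟨X, hX, hinf⟩ := exists_vis_infinite hfin h2
        have he := h X hX
        rw [proj_inf_of_infinite hinf] at he
        exact nomatch (he : Word.fin (projL X l1) = _)
  | inf f1 =>
    cases w2 with
    | fin l2 =>
      constructor
      · intro h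
        exact absurd (h : _ ∧ _).1 not_wll_inf_fin
      · intro h
        exfalso
        obtain ⟨X, hX, hinf⟩ := exists_vis_infinite hfin h1
        have he := h X hX
        rw [proj_inf_of_infinite hinf] at he
        exact nomatch (he.symm : Word.fin (projL X l2) = _)
    | inf f2 =>
      constructor
      · intro h X _
        obtain ⟨hA, hB⟩ := (h : _ ∧ _)
        exact proj_eq_of_wll hA hB X
      · intro h
        exact ⟨wll_of_proj_eq h1 h2 h,
          wll_of_proj_eq h2 h1 (fun X hX => (h X hX).symm)⟩
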